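/- Let S be a finite type, let μ₁ and μ₂ be probability mass functions on S, and let P₁, P₂ : S → PMF(S) be probability kernels. Define the pushforward distributions (μᵢPᵢ)(s') = ∑_{s ∈ S} μᵢ(s) · Pᵢ(s)(s') for i = 1, 2. Then D_TV(μ₁P₁, μ₂P₂) ≤ D_TV(μ₁, μ₂) + max_{s ∈ S} D_TV(P₁(s), P₂(s)). -/

import Mathlib

open scoped BigOperators

/-- Total variation distance between two PMFs on a finite type. -/
noncomputable def tv {X : Type*} [Fintype X] (p q : PMF X) : ℝ :=
  (1 / 2) * ∑ x, |(p x).toReal - (q x).toReal|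

lemma pmf_sum_toReal {X : Type*} [Fintype X] (p : PMF X) :
    ∑ x, (p x).toReal = 1 := by
  rw [← ENNReal.toReal_sum (fun a _ => p.apply_ne_top a), ← tsum_fintype (L := .unconditional _), p.tsum_coe]
  simp

lemma tv_nonneg {X : Type*} [Fintype X] (p q : PMF X) : 0 ≤ tv p q := by
  unfold tv
  positivity

/-- For PMFs `μ₁, μ₂` on a finite type `S` and probability kernels
`P₁, P₂ : S → PMF S`, the pushforward distributions `(μᵢPᵢ)(s') = ∑_s μᵢ(s) · Pᵢ(s)(s')`
satisfy `D_TV(μ₁P₁, μ₂P₂) ≤ D_TV(μ₁, μ₂) + max_s D_TV(P₁(s), P₂(s))`. -/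
theorem tv_pushforward_le {S : Type*} [Fintype S]
    (μ₁ μ₂ : PMF S) (P₁ P₂ : S → PMF S)
    (ν₁ ν₂ : PMF S)
    (hν₁ : ∀ s', ν₁ s' = ∑ s, μ₁ s * P₁ s s')
    (hν₂ : ∀ s', ν₂ s' = ∑ s, μ₂ s * P₂ s s') :
    tv ν₁ ν₂ ≤ tv μ₁ μ₂ + ⨆ s : S, tv (P₁ s) (P₂ s) := by
  set a : S → ℝ := fun s => (μ₁ s).toReal with ha
  set b : S → ℝ := fun s => (μ₂ s).toReal with hb
  set p : S → S → ℝ := fun s s' => (P₁ s s').toReal with hp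
  set q : S → S → ℝ := fun s s' => (P₂ s s').toReal with hq
  have hbdd : BddAbove (Set.range fun s => tv (P₁ s) (P₂ s)) :=
    (Set.finite_range _).bddAbove
  set M : ℝ := ⨆ s : S, tv (P₁ s) (P₂ s) with hM
  have hν₁' : ∀ s', (ν₁ s').toReal = ∑ s, a s * p s s' := by
    intro s'
    rw [hν₁ s', ENNReal.toReal_sum (fun s _ => by
      exact ENNReal.mul_ne_top (μ₁.apply_ne_top s) ((P₁ s).apply_ne_top s'))]
    simp [ENNReal.toReal_mul, a, p]
  have hν₂' : ∀ s', (ν₂ s').toReal = ∑ s, b s * q s s' := by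
    intro s'
    rw [hν₂ s', ENNReal.toReal_sum (fun s _ => by
      exact ENNReal.mul_ne_top (μ₂.apply_ne_top s) ((P₂ s).apply_ne_top s'))]
    simp [ENNReal.toReal_mul, b, q]
  -- pointwise bound
  have key : ∀ s', |(ν₁ s').toReal - (ν₂ s').toReal|
      ≤ ∑ s, (|a s - b s| * p s s' + b s * |p s s' - q s s'|) := by
    intro s'
    rw [hν₁' s', hν₂' s', ← Finset.sum_sub_distrib]
    refine (Finset.abs_sum_le_sum_abs _ _).trans (Finset.sum_le_sum fun s _ => ?_)
    have : a s * p s s' - b s * q s s' = (a s - b s) * p s s' + b s * (p s s' - q s s') := by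
      ring
    rw [this]
    refine (abs_add_le _ _).trans ?_
    rw [abs_mul, abs_mul, abs_of_nonneg (ENNReal.toReal_nonneg : (0:ℝ) ≤ p s s'),
      abs_of_nonneg (ENNReal.toReal_nonneg : (0:ℝ) ≤ b s)]
  have hsumP : ∀ s, ∑ s', p s s' = 1 := fun s => pmf_sum_toReal (P₁ s)
  have hsumb : ∑ s, b s = 1 := pmf_sum_toReal μ₂
  have main : ∑ s', |(ν₁ s').toReal - (ν₂ s').toReal|
      ≤ 2 * tv μ₁ μ₂ + 2 * M := by
    calc ∑ s', |(ν₁ s').toReal - (ν₂ s').toReal|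
        ≤ ∑ s', ∑ s, (|a s - b s| * p s s' + b s * |p s s' - q s s'|) :=
          Finset.sum_le_sum fun s' _ => key s'
      _ = ∑ s, (|a s - b s| * (∑ s', p s s') + b s * ∑ s', |p s s' - q s s'|) := by
          rw [Finset.sum_comm]
          refine Finset.sum_congr rfl fun s _ => ?_
          rw [Finset.sum_add_distrib, ← Finset.mul_sum, ← Finset.mul_sum]
      _ = ∑ s, (|a s - b s| + b s * (2 * tv (P₁ s) (P₂ s))) := by
          refine Finset.sum_congr rfl fun s _ => ?_
          rw [hsumP s, mul_one]
          congr 1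
          unfold tv
          ring
      _ ≤ ∑ s, (|a s - b s| + b s * (2 * M)) := by
          refine Finset.sum_le_sum fun s _ => ?_
          exact add_le_add le_rfl (mul_le_mul_of_nonneg_left
            (by linarith [le_ciSup hbdd s]) ENNReal.toReal_nonneg)
      _ = 2 * tv μ₁ μ₂ + 2 * M := by
          rw [Finset.sum_add_distrib, ← Finset.sum_mul, hsumb, one_mul]
          unfold tv
          ring
  have : tv ν₁ ν₂ = (1/2) * ∑ s', |(ν₁ s').toReal - (ν₂ s').toReal| := rfl
  rw [this]
  linarith [main]
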